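/- Let k be a positive integer and n = 4k. Let 𝒜 be the symmetric tensor of order 4 and dimension n with entries 𝒜_{iiii} = n for all i ∈ {1,…,n}, 𝒜_{i_1 i_2 i_3 i_4} = −1/6 whenever (i_1, i_2, i_3, i_4) is a permutation of (4l−3, 4l−2, 4l−1, 4l) for some l ∈ {1,…,k}, and all other entries zero; equivalently, 𝒜x^4 = n·Σ_{i=1}^n x_i^4 − 4·Σ_{l=1}^{k} x_{4l−3} x_{4l−2} x_{4l−1} x_{4l}. Then n + 1 is an H-eigenvalue of 𝒜 and every H-eigenvalue λ of 𝒜 satisfies λ ≤ n + 1; that is, the maximum H-eigenvalue of 𝒜 equals n + 1. -/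

import Mathlib

open MvPolynomial Finset

noncomputable section

/-- `tmul A x = 𝒜 x^m`, the homogeneous form associated with an
`m`-th order `n`-dimensional tensor `A`. -/
def tmul {m n : ℕ} (A : (Fin m → Fin n) → ℝ) (x : Fin n → ℝ) : ℝ :=
  ∑ g : Fin m → Fin n, A g * ∏ j, x (g j)

/-- A tensor is symmetric if its entries are invariant under permutations of the indices. -/
def IsSymT {m n : ℕ} (A : (Fin m → Fin n) → ℝ) : Prop :=
  ∀ (σ : Equiv.Perm (Fin m)) (g : Fin m → Fin n), A (g ∘ σ) = A g

/-- `lam` is an H-eigenvalue of a tensor of order `m + 1`: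
there is a nonzero `x` with `𝒜 x^m = lam * x^{[m]}`. -/
def IsHEig {m n : ℕ} (A : (Fin (m + 1) → Fin n) → ℝ) (lam : ℝ) : Prop :=
  ∃ x : Fin n → ℝ, x ≠ 0 ∧ ∀ i : Fin n,
    (∑ g : Fin m → Fin n, A (Fin.cons i g) * ∏ j, x (g j)) = lam * x i ^ m

/-- `𝒜_Γ x_Γ^m` for a subtensor `B` indexed by an index set `Γ ⊆ {1,…,n}`. -/
def subTmul {m n : ℕ} (Γ : Finset (Fin n)) (B : (Fin m → Γ) → ℝ) (x : Fin n → ℝ) : ℝ :=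
  ∑ g : Fin m → Γ, B g * ∏ j, x (g j).1

/-- An index tuple is off-diagonal if not all of its entries coincide. -/
def NotDiag {m : ℕ} {I : Type*} (g : Fin m → I) : Prop := ¬ ∀ j j' : Fin m, g j = g j'

/-- Condition (iii) in the definition of a W-tensor, for one subtensor. -/
def WCondIII {m n : ℕ} {Γ : Finset (Fin n)} (B : (Fin m → Γ) → ℝ) : Prop :=
  (∃ gb : Fin m → Γ, NotDiag gb ∧ ∀ g : Fin m → Γ, NotDiag g →
      (∀ σ : Equiv.Perm (Fin m), g ≠ gb ∘ σ) → B g = 0) ∨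
  (∀ g : Fin m → Γ, NotDiag g → 0 ≤ B g)

/-- Condition (i) in the definition of a W-tensor. -/
def WCondI {n s : ℕ} (Γ : Fin s → Finset (Fin n)) : Prop :=
  ∀ p : Fin s, 0 < (p : ℕ) →
    (((Finset.univ.filter fun l => l < p).biUnion Γ) ∩ Γ p).card ≤ 1

/-- W-tensor. -/
def IsWTensor {m n : ℕ} (A : (Fin m → Fin n) → ℝ) : Prop :=
  ∃ (s : ℕ) (Γ : Fin s → Finset (Fin n)) (B : ∀ l : Fin s, (Fin m → Γ l) → ℝ),
    0 < s ∧ s ≤ n ∧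
    Function.Injective Γ ∧
    Finset.univ.biUnion Γ = Finset.univ ∧
    WCondI Γ ∧
    (∀ x : Fin n → ℝ, tmul A x = ∑ l, subTmul (Γ l) (B l) x) ∧
    (∀ l, WCondIII (B l))

/-- Sums of squares of polynomials. -/
def IsSOSPoly {σ : Type*} (p : MvPolynomial σ ℝ) : Prop :=
  ∃ (r : ℕ) (q : Fin r → MvPolynomial σ ℝ), p = ∑ j, q j ^ 2

/-- The polynomial `𝒜 x^m` as a formal multivariate polynomial. -/
def tpoly {m n : ℕ} (A : (Fin m → Fin n) → ℝ) : MvPolynomial (Fin n) ℝ :=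
  ∑ g : Fin m → Fin n, MvPolynomial.C (A g) * ∏ j, MvPolynomial.X (g j)

/-- The polynomial `𝒜_Γ x_Γ^m` of a subtensor, in the variables `x_Γ`. -/
def subTpoly {m n : ℕ} (Γ : Finset (Fin n)) (B : (Fin m → Γ) → ℝ) : MvPolynomial Γ ℝ :=
  ∑ g : Fin m → Γ, MvPolynomial.C (B g) * ∏ j, MvPolynomial.X (g j)

/-- A (symmetric) tensor is copositive if `𝒜 x^m ≥ 0` for all entrywise-nonnegative `x`. -/
def Copositive {m n : ℕ} (A : (Fin m → Fin n) → ℝ) : Prop :=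
  ∀ x : Fin n → ℝ, (∀ i, 0 ≤ x i) → 0 ≤ tmul A x


open Classical in
/-- The 4th order `n = 4k` dimensional tensor of Example 3.1: diagonal entries `n`,
entries `−1/6` at all permutations of `(4l−3, 4l−2, 4l−1, 4l)` (1-based), zero otherwise. -/
noncomputable def exTensor (k : ℕ) : (Fin 4 → Fin (4 * k)) → ℝ := fun g =>
  if ∀ j j' : Fin 4, g j = g j' then ((4 * k : ℕ) : ℝ)
  else if ∃ (l : Fin k) (σ : Equiv.Perm (Fin 4)),
      g = fun j => (⟨4 * l.1 + (σ j).1, by have := l.2; have := (σ j).2; omega⟩ : Fin (4 * k))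
    then -(1 / 6) else 0

def exEmb {k : ℕ} (l : Fin k) (j : Fin 4) : Fin (4 * k) :=
  ⟨4 * l.1 + j.1, show 4 * l.1 + j.1 + 0 < 4 * k from by have := l.2; have := j.2; omega⟩

lemma exEmbInj {k : ℕ} {l l' : Fin k} {j j' : Fin 4} (h : exEmb l j = exEmb l' j') :
    l = l' ∧ j = j' := by
  have := congrArg Fin.val h
  simp only [exEmb] at this
  have hj := j.2; have hj' := j'.2
  constructor <;> [exact Fin.ext (by omega); exact Fin.ext (by omega)]

lemma exTensorEq {k : ℕ} (g : Fin 4 → Fin (4 * k)) :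
    exTensor k g =
      (∑ i : Fin (4 * k), if g = Function.const (Fin 4) i then ((4 * k : ℕ) : ℝ) else 0)
      + ∑ l : Fin k, ∑ σ : Equiv.Perm (Fin 4),
          if g = (fun j => exEmb l (σ j)) then -(1 / 6 : ℝ) else 0 := by
  classical
  have hblock_ne_const : ∀ (l : Fin k) (σ : Equiv.Perm (Fin 4)) (i : Fin (4 * k)),
      (fun j => exEmb l (σ j)) ≠ Function.const (Fin 4) i := by
    intro l σ i h
    have h0 := congrFun h (σ.symm 0)
    have h1 := congrFun h (σ.symm 1)
    simp only [Equiv.apply_symm_apply, Function.const] at h0 h1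
    have := h0.trans h1.symm
    have := congrArg Fin.val this
    simp [exEmb] at this
  unfold exTensor
  by_cases hc : ∀ j j' : Fin 4, g j = g j'
  · rw [if_pos hc]
    have hg : g = Function.const (Fin 4) (g 0) := funext fun j => hc j 0
    have h1 : (∑ i : Fin (4 * k), if g = Function.const (Fin 4) i then ((4 * k : ℕ) : ℝ) else 0)
        = ((4 * k : ℕ) : ℝ) := by
      rw [Finset.sum_eq_single (g 0)]
      · rw [if_pos hg]
      · intro i _ hi
        rw [if_neg]
        intro h; exact hi (congrFun (hg.symm.trans h) 0).symm
      · simp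
    have h2 : (∑ l : Fin k, ∑ σ : Equiv.Perm (Fin 4),
          if g = (fun j => exEmb l (σ j)) then -(1 / 6 : ℝ) else 0) = 0 := by
      apply Finset.sum_eq_zero; intro l _
      apply Finset.sum_eq_zero; intro σ _
      rw [if_neg]
      intro h
      exact hblock_ne_const l σ (g 0) (h ▸ hg)
    rw [h1, h2, add_zero]
  · rw [if_neg hc]
    have h1 : (∑ i : Fin (4 * k), if g = Function.const (Fin 4) i then ((4 * k : ℕ) : ℝ) else 0)
        = 0 := by
      apply Finset.sum_eq_zero; intro i _
      rw [if_neg]; intro h; exact hc fun j j' => by rw [h]; rfl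
    rw [h1, zero_add]
    by_cases hb : ∃ (l : Fin k) (σ : Equiv.Perm (Fin 4)),
        g = fun j => (⟨4 * l.1 + (σ j).1, by have := l.2; have := (σ j).2; omega⟩ : Fin (4 * k))
    · rw [if_pos hb]
      obtain ⟨l₀, σ₀, hg⟩ := hb
      have hg' : g = fun j => exEmb l₀ (σ₀ j) := hg
      rw [Finset.sum_eq_single l₀]
      · rw [Finset.sum_eq_single σ₀]
        · rw [if_pos hg']
        · intro σ _ hσ
          rw [if_neg]; intro h
          apply hσ; ext j
          have := (congrFun (h.symm.trans hg') j)
          exact congrArg Fin.val (exEmbInj this).2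
        · simp
      · intro l _ hl
        apply Finset.sum_eq_zero; intro σ _
        rw [if_neg]; intro h
        have := (congrFun (h.symm.trans hg') (0 : Fin 4))
        exact hl (exEmbInj this).1
      · simp
    · rw [if_neg hb]
      symm
      apply Finset.sum_eq_zero; intro l _
      apply Finset.sum_eq_zero; intro σ _
      rw [if_neg]; intro h
      exact hb ⟨l, σ, h⟩

lemma exPart1 (k : ℕ) (x : Fin (4 * k) → ℝ) :
    tmul (exTensor k) x = ((4 * k : ℕ) : ℝ) * (∑ i, x i ^ 4)
      - 4 * ∑ l : Fin k, ∏ j : Fin 4, x (exEmb l j) := by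
  classical
  unfold tmul
  have key : ∀ g : Fin 4 → Fin (4 * k), exTensor k g * ∏ j, x (g j) =
      (∑ i : Fin (4 * k), if g = Function.const (Fin 4) i
          then ((4 * k : ℕ) : ℝ) * ∏ j, x (g j) else 0)
      + ∑ l : Fin k, ∑ σ : Equiv.Perm (Fin 4),
          if g = (fun j => exEmb l (σ j)) then -(1 / 6 : ℝ) * ∏ j, x (g j) else 0 := by
    intro g
    rw [exTensorEq, add_mul, Finset.sum_mul]
    congr 1
    · exact Finset.sum_congr rfl fun i _ => by rw [ite_mul, zero_mul]
    · rw [Finset.sum_mul]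
      refine Finset.sum_congr rfl fun l _ => ?_
      rw [Finset.sum_mul]
      exact Finset.sum_congr rfl fun σ _ => by rw [ite_mul, zero_mul]
  simp_rw [key]
  rw [Finset.sum_add_distrib]
  have h1 : (∑ g : Fin 4 → Fin (4 * k), ∑ i : Fin (4 * k),
      if g = Function.const (Fin 4) i then ((4 * k : ℕ) : ℝ) * ∏ j, x (g j) else 0)
      = ((4 * k : ℕ) : ℝ) * ∑ i, x i ^ 4 := by
    rw [Finset.sum_comm, Finset.mul_sum]
    refine Finset.sum_congr rfl fun i _ => ?_
    rw [Finset.sum_ite_eq' Finset.univ (Function.const (Fin 4) i)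
      (fun g => ((4 * k : ℕ) : ℝ) * ∏ j, x (g j)), if_pos (Finset.mem_univ _)]
    simp [Finset.prod_const]
  have h2 : (∑ g : Fin 4 → Fin (4 * k), ∑ l : Fin k, ∑ σ : Equiv.Perm (Fin 4),
      if g = (fun j => exEmb l (σ j)) then -(1 / 6 : ℝ) * ∏ j, x (g j) else 0)
      = - (4 * ∑ l : Fin k, ∏ j : Fin 4, x (exEmb l j)) := by
    rw [Finset.sum_comm]
    have : ∀ l : Fin k, (∑ g : Fin 4 → Fin (4 * k), ∑ σ : Equiv.Perm (Fin 4),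
        if g = (fun j => exEmb l (σ j)) then -(1 / 6 : ℝ) * ∏ j, x (g j) else 0)
        = -4 * ∏ j : Fin 4, x (exEmb l j) := by
      intro l
      rw [Finset.sum_comm]
      have hσ : ∀ σ : Equiv.Perm (Fin 4), (∑ g : Fin 4 → Fin (4 * k),
          if g = (fun j => exEmb l (σ j)) then -(1 / 6 : ℝ) * ∏ j, x (g j) else 0)
          = -(1 / 6 : ℝ) * ∏ j : Fin 4, x (exEmb l j) := by
        intro σ
        rw [Finset.sum_ite_eq' Finset.univ (fun j => exEmb l (σ j))
          (fun g => -(1 / 6 : ℝ) * ∏ j, x (g j)), if_pos (Finset.mem_univ _)]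
        rw [Equiv.prod_comp σ (fun j => x (exEmb l j))]
      simp_rw [hσ]
      rw [Finset.sum_const, Finset.card_univ, Fintype.card_perm, Fintype.card_fin]
      simp only [Nat.factorial]
      norm_num
      ring
    simp_rw [this, neg_mul]
    simp [Finset.mul_sum]
  rw [h1, h2]
  ring

def exBlk {k : ℕ} (i : Fin (4 * k)) : Fin k := ⟨i.1 / 4, by have := i.2; omega⟩
def exPos {k : ℕ} (i : Fin (4 * k)) : Fin 4 := ⟨i.1 % 4, by omega⟩

lemma exEmbBlkPos {k : ℕ} (i : Fin (4 * k)) : exEmb (exBlk i) (exPos i) = i := by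
  apply Fin.ext; simp [exEmb, exBlk, exPos]; omega

lemma exCard6 : ∀ p : Fin 4,
    (Finset.univ.filter fun σ : Equiv.Perm (Fin 4) => σ 0 = p).card = 6 := by decide

lemma exProdsucc (σ : Equiv.Perm (Fin 4)) (f : Fin 4 → ℝ) :
    ∏ j : Fin 3, f (σ j.succ) = ∏ t ∈ Finset.univ.erase (σ 0), f t := by
  classical
  have himg : (Finset.univ.image fun j : Fin 3 => σ j.succ)
      = Finset.univ.erase (σ 0) := by
    apply Finset.eq_of_subset_of_card_le
    · intro t ht
      simp only [Finset.mem_image, Finset.mem_univ, true_and] at ht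
      obtain ⟨j, rfl⟩ := ht
      refine Finset.mem_erase.2 ⟨fun h => ?_, Finset.mem_univ _⟩
      exact (Fin.succ_ne_zero j) (σ.injective h)
    · rw [Finset.card_erase_of_mem (Finset.mem_univ _),
        Finset.card_image_of_injective _ (fun a b h => Fin.succ_injective _ (σ.injective h))]
      simp
  rw [← himg, Finset.prod_image]
  intro a _ b _ h
  exact Fin.succ_injective _ (σ.injective h)

lemma exEigsum {k : ℕ} (x : Fin (4 * k) → ℝ) (i : Fin (4 * k)) :
    (∑ g : Fin 3 → Fin (4 * k), exTensor k (Fin.cons i g) * ∏ j, x (g j))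
      = ((4 * k : ℕ) : ℝ) * x i ^ 3
        - ∏ t ∈ Finset.univ.erase (exPos i), x (exEmb (exBlk i) t) := by
  classical
  have key : ∀ g : Fin 3 → Fin (4 * k), exTensor k (Fin.cons i g) * ∏ j, x (g j) =
      (∑ i' : Fin (4 * k), if Fin.cons i g = Function.const (Fin 4) i'
          then ((4 * k : ℕ) : ℝ) * ∏ j, x (g j) else 0)
      + ∑ l : Fin k, ∑ σ : Equiv.Perm (Fin 4),
          if Fin.cons i g = (fun j => exEmb l (σ j))
            then -(1 / 6 : ℝ) * ∏ j, x (g j) else 0 := by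
    intro g
    rw [exTensorEq, add_mul, Finset.sum_mul]
    congr 1
    · exact Finset.sum_congr rfl fun i' _ => by rw [ite_mul, zero_mul]
    · rw [Finset.sum_mul]
      refine Finset.sum_congr rfl fun l _ => ?_
      rw [Finset.sum_mul]
      exact Finset.sum_congr rfl fun σ _ => by rw [ite_mul, zero_mul]
  simp_rw [key]
  rw [Finset.sum_add_distrib]
  have h1 : (∑ g : Fin 3 → Fin (4 * k), ∑ i' : Fin (4 * k),
      if Fin.cons i g = Function.const (Fin 4) i'
        then ((4 * k : ℕ) : ℝ) * ∏ j, x (g j) else 0)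
      = ((4 * k : ℕ) : ℝ) * x i ^ 3 := by
    rw [Finset.sum_comm]
    rw [Finset.sum_eq_single i]
    · have hcond : ∀ g : Fin 3 → Fin (4 * k),
          (Fin.cons i g = Function.const (Fin 4) i) ↔ g = Function.const (Fin 3) i := by
        intro g
        constructor
        · intro h; funext j
          have := congrFun h j.succ
          simpa [Fin.cons_succ] using this
        · intro h; funext j
          refine Fin.cases ?_ ?_ j
          · simp [Fin.cons_zero]
          · intro j'; simp [Fin.cons_succ, h]
      simp_rw [hcond]
      rw [Finset.sum_ite_eq' Finset.univ (Function.const (Fin 3) i)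
        (fun g => ((4 * k : ℕ) : ℝ) * ∏ j, x (g j)), if_pos (Finset.mem_univ _)]
      simp [Finset.prod_const]
    · intro i' _ hi'
      apply Finset.sum_eq_zero
      intro g _
      rw [if_neg]
      intro h
      exact hi' (by simpa [Fin.cons_zero] using (congrFun h 0).symm)
    · simp
  have h2 : (∑ g : Fin 3 → Fin (4 * k), ∑ l : Fin k, ∑ σ : Equiv.Perm (Fin 4),
      if Fin.cons i g = (fun j => exEmb l (σ j))
        then -(1 / 6 : ℝ) * ∏ j, x (g j) else 0)
      = - ∏ t ∈ Finset.univ.erase (exPos i), x (exEmb (exBlk i) t) := by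
    rw [Finset.sum_comm]
    have hinner : ∀ l : Fin k, (∑ g : Fin 3 → Fin (4 * k), ∑ σ : Equiv.Perm (Fin 4),
        if Fin.cons i g = (fun j => exEmb l (σ j))
          then -(1 / 6 : ℝ) * ∏ j, x (g j) else 0)
        = ∑ σ : Equiv.Perm (Fin 4), if exEmb l (σ 0) = i
            then -(1 / 6 : ℝ) * ∏ j : Fin 3, x (exEmb l (σ j.succ)) else 0 := by
      intro l
      rw [Finset.sum_comm]
      refine Finset.sum_congr rfl fun σ _ => ?_
      have hcond : ∀ g : Fin 3 → Fin (4 * k),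
          (Fin.cons i g = (fun j => exEmb l (σ j)))
            ↔ (exEmb l (σ 0) = i ∧ g = fun j : Fin 3 => exEmb l (σ j.succ)) := by
        intro g
        constructor
        · intro h
          constructor
          · have := congrFun h 0
            simp only [Fin.cons_zero] at this
            exact this.symm
          · funext j
            simpa [Fin.cons_succ] using congrFun h j.succ
        · rintro ⟨h0, rfl⟩
          funext j
          refine Fin.cases ?_ ?_ j
          · simpa [Fin.cons_zero] using h0.symm
          · intro j'; simp [Fin.cons_succ]
      simp_rw [hcond]
      by_cases h0 : exEmb l (σ 0) = i
      · rw [if_pos h0]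
        rw [show (fun g : Fin 3 → Fin (4 * k) =>
          if exEmb l (σ 0) = i ∧ g = fun j : Fin 3 => exEmb l (σ j.succ)
            then -(1 / 6 : ℝ) * ∏ j, x (g j) else 0) = fun g =>
          if g = (fun j : Fin 3 => exEmb l (σ j.succ))
            then -(1 / 6 : ℝ) * ∏ j, x (g j) else 0 from
          funext fun g => by simp [h0]]
        rw [Finset.sum_ite_eq' Finset.univ (fun j : Fin 3 => exEmb l (σ j.succ))
          (fun g => -(1 / 6 : ℝ) * ∏ j, x (g j)), if_pos (Finset.mem_univ _)]
      · rw [if_neg h0]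
        apply Finset.sum_eq_zero
        intro g _
        rw [if_neg]
        intro h
        exact h0 h.1
    simp_rw [hinner]
    rw [Finset.sum_eq_single (exBlk i)]
    · have hcond : ∀ σ : Equiv.Perm (Fin 4), (exEmb (exBlk i) (σ 0) = i) ↔ σ 0 = exPos i := by
        intro σ
        constructor
        · intro h
          exact (exEmbInj (h.trans (exEmbBlkPos i).symm)).2
        · intro h; rw [h]; exact exEmbBlkPos i
      calc (∑ σ : Equiv.Perm (Fin 4), if exEmb (exBlk i) (σ 0) = i
            then -(1 / 6 : ℝ) * ∏ j : Fin 3, x (exEmb (exBlk i) (σ j.succ)) else 0)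
          = ∑ σ : Equiv.Perm (Fin 4), if σ 0 = exPos i
            then -(1 / 6 : ℝ) * ∏ t ∈ Finset.univ.erase (exPos i), x (exEmb (exBlk i) t) else 0 := by
            refine Finset.sum_congr rfl fun σ _ => ?_
            rw [if_congr (hcond σ) rfl rfl]
            by_cases h : σ 0 = exPos i
            · rw [if_pos h, if_pos h, exProdsucc σ (fun t => x (exEmb (exBlk i) t)), h]
            · rw [if_neg h, if_neg h]
        _ = - ∏ t ∈ Finset.univ.erase (exPos i), x (exEmb (exBlk i) t) := by
            rw [Finset.sum_ite, Finset.sum_const, Finset.sum_const_zero, add_zero,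
              exCard6 (exPos i)]
            ring
    · intro l _ hl
      apply Finset.sum_eq_zero
      intro σ _
      rw [if_neg]
      intro h
      exact hl (exEmbInj (h.trans (exEmbBlkPos i).symm)).1
    · simp
  rw [h1, h2]
  ring

lemma exProdErasePm (p : Fin 4) :
    (∏ t ∈ Finset.univ.erase p, (if t.1 = 3 then (-1 : ℝ) else 1))
      = if p.1 = 3 then 1 else -1 := by
  have htot : (∏ t : Fin 4, (if t.1 = 3 then (-1 : ℝ) else 1)) = -1 := by
    rw [Fin.prod_univ_four]; norm_num [show ((3:Fin 4):ℕ) = 3 from rfl, show ((0:Fin 4):ℕ) = 0 from rfl, show ((1:Fin 4):ℕ) = 1 from rfl, show ((2:Fin 4):ℕ) = 2 from rfl]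
  have h := Finset.prod_erase_mul Finset.univ
    (fun t : Fin 4 => if t.1 = 3 then (-1 : ℝ) else 1) (Finset.mem_univ p)
  rw [htot] at h
  by_cases hp : p.1 = 3 <;> simp only [hp, if_true, if_false] at h ⊢ <;> linarith

lemma exPart2 (k : ℕ) (hk : 0 < k) :
    IsHEig (exTensor k) (((4 * k : ℕ) : ℝ) + 1) := by
  set x : Fin (4 * k) → ℝ := fun i => if i.1 % 4 = 3 then (-1 : ℝ) else 1 with hxdef
  refine ⟨x, ?_, ?_⟩
  · intro h
    have := congrFun h ⟨0, by omega⟩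
    norm_num [hxdef] at this
  · intro i
    rw [exEigsum x i]
    have hx : ∀ t : Fin 4, x (exEmb (exBlk i) t) = if t.1 = 3 then (-1 : ℝ) else 1 := by
      intro t
      have ht : (4 * (exBlk i).1 + t.1) % 4 = t.1 := by have := t.2; omega
      simp only [hxdef, exEmb, ht]
    simp only [hx]
    rw [exProdErasePm]
    have hp : (exPos i).1 = i.1 % 4 := rfl
    by_cases hc : i.1 % 4 = 3
    · have hxi : x i = -1 := by simp [hxdef, hc]
      simp only [hp, hc, if_true, hxi]
      ring
    · have hxi : x i = 1 := by simp [hxdef, hc]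
      simp only [hp, hc, if_false, if_neg hc, hxi]
      ring
lemma exPart3 (k : ℕ) (hk : 0 < k) (lam : ℝ) (h : IsHEig (exTensor k) lam) :
    lam ≤ ((4 * k : ℕ) : ℝ) + 1 := by
  obtain ⟨x, hx, heig⟩ := h
  obtain ⟨i, -, hmax⟩ := Finset.exists_max_image Finset.univ (fun j => |x j|)
    ⟨⟨0, by omega⟩, Finset.mem_univ _⟩
  have hpos : 0 < |x i| := by
    obtain ⟨j, hj⟩ := Function.ne_iff.1 hx
    calc 0 < |x j| := abs_pos.2 hj
    _ ≤ |x i| := hmax j (Finset.mem_univ _)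
  have heq := heig i
  rw [exEigsum] at heq
  set P := ∏ t ∈ Finset.univ.erase (exPos i), x (exEmb (exBlk i) t) with hPdef
  have hP : (((4 * k : ℕ) : ℝ) - lam) * x i ^ 3 = P := by
    rw [sub_mul]; linarith
  have hPle : |P| ≤ |x i| ^ 3 := by
    rw [hPdef, Finset.abs_prod]
    calc (∏ t ∈ Finset.univ.erase (exPos i), |x (exEmb (exBlk i) t)|)
        ≤ ∏ t ∈ Finset.univ.erase (exPos i), |x i| :=
          Finset.prod_le_prod (fun t _ => abs_nonneg _)
            (fun t _ => hmax _ (Finset.mem_univ _))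
      _ = |x i| ^ 3 := by
          rw [Finset.prod_const, Finset.card_erase_of_mem (Finset.mem_univ _)]
          simp
  have habs : |((4 * k : ℕ) : ℝ) - lam| * |x i| ^ 3 ≤ |x i| ^ 3 := by
    rw [← hP, abs_mul, abs_pow] at hPle
    exact hPle
  have h1 : |((4 * k : ℕ) : ℝ) - lam| ≤ 1 := by
    have hc : 0 < |x i| ^ 3 := pow_pos hpos 3
    nlinarith
  have := (abs_le.1 h1).1
  linarith


/-- Example 3.1: for the tensor above, `𝒜x⁴ = n ∑ x_i⁴ − 4 ∑_l x_{4l−3}x_{4l−2}x_{4l−1}x_{4l}`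
with `n = 4k`, and the maximum H-eigenvalue of `𝒜` equals `n + 1`. -/
theorem example31 (k : ℕ) (hk : 0 < k) :
    (∀ x : Fin (4 * k) → ℝ, tmul (exTensor k) x
        = ((4 * k : ℕ) : ℝ) * (∑ i, x i ^ 4)
          - 4 * ∑ l : Fin k, ∏ j : Fin 4,
              x ⟨4 * l.1 + j.1, by have := l.2; have := j.2; omega⟩) ∧
    IsHEig (exTensor k) (((4 * k : ℕ) : ℝ) + 1) ∧
    (∀ lam : ℝ, IsHEig (exTensor k) lam → lam ≤ ((4 * k : ℕ) : ℝ) + 1) := by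
  refine ⟨fun x => exPart1 k x, exPart2 k hk, fun lam h => exPart3 k hk lam h⟩

end
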